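/- Let n ≥ 1, W a linear subspace of ℝⁿ, d, c ∈ ℝⁿ, P = {x ∈ ℝⁿ : x ∈ W + d, x ≥ 0}, D = {s ∈ ℝⁿ : s ∈ W⊥ + c, s ≥ 0}, and let x⋆ ∈ P, s⋆ ∈ D with ⟨x⋆, s⋆⟩ = 0. Let (x, s) be a central path point at parameter μ > 0. Then ⟨x, s⋆⟩ ≤ nμ and ⟨x⋆, s⟩ ≤ nμ (so x ∈ P_{nμ} and s ∈ D_{nμ}, whence x_i ≤ x^m_i(nμ) and s_i ≤ s^m_i(nμ) for all i); moreover, for every y ∈ P with ⟨y, s⋆⟩ ≤ nμ, every t ∈ D with ⟨x⋆, t⟩ ≤ nμ, and every i ∈ [n], one has y_i ≤ 2n·x_i and t_i ≤ 2n·s_i. Consequently the central path point satisfies z^m(nμ)/(2n) ≤ (x, s) ≤ z^m(nμ) entrywise, where z^m(g) = (x^m(g), s^m(g)) is the max central path. -/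

import Mathlib

open scoped RealInnerProductSpace

/-- The `i`-th coordinate `x^m_i(g)` of the primal max central path:
the supremum of `x i` over primal feasible points `x` with optimality gap at most `g`. -/
noncomputable def primalMCP (n : ℕ) (W : Submodule ℝ (EuclideanSpace ℝ (Fin n)))
    (d sstar : EuclideanSpace ℝ (Fin n)) (g : ℝ) (i : Fin n) : ℝ :=
  sSup {t : ℝ | ∃ x : EuclideanSpace ℝ (Fin n),
    x - d ∈ W ∧ (∀ j, 0 ≤ x j) ∧ ⟪x, sstar⟫ ≤ g ∧ t = x i}

/-- The `i`-th coordinate `s^m_i(g)` of the dual max central path: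
the supremum of `s i` over dual feasible points `s` with optimality gap at most `g`. -/
noncomputable def dualMCP (n : ℕ) (W : Submodule ℝ (EuclideanSpace ℝ (Fin n)))
    (c xstar : EuclideanSpace ℝ (Fin n)) (g : ℝ) (i : Fin n) : ℝ :=
  sSup {t : ℝ | ∃ s : EuclideanSpace ℝ (Fin n),
    s - c ∈ Wᗮ ∧ (∀ j, 0 ≤ s j) ∧ ⟪xstar, s⟫ ≤ g ∧ t = s i}

lemma inner_nonneg_of_nonneg {n : ℕ} (a b : EuclideanSpace ℝ (Fin n))
    (ha : ∀ i, 0 ≤ a i) (hb : ∀ i, 0 ≤ b i) : (0:ℝ) ≤ ⟪a, b⟫ := by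
  rw [PiLp.inner_apply]
  exact Finset.sum_nonneg fun i _ => mul_nonneg (hb i) (ha i)

lemma single_le_inner {n : ℕ} (a b : EuclideanSpace ℝ (Fin n))
    (ha : ∀ i, 0 ≤ a i) (hb : ∀ i, 0 ≤ b i) (i : Fin n) : a i * b i ≤ ⟪a, b⟫ := by
  rw [PiLp.inner_apply]
  have : ∀ j ∈ Finset.univ, 0 ≤ a j * b j := fun j _ => mul_nonneg (ha j) (hb j)
  simpa [mul_comm] using Finset.single_le_sum this (Finset.mem_univ i)

lemma inner_cross {n : ℕ} {W : Submodule ℝ (EuclideanSpace ℝ (Fin n))}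
    {d c : EuclideanSpace ℝ (Fin n)} {a b u v : EuclideanSpace ℝ (Fin n)}
    (ha : a - d ∈ W) (hb : b - d ∈ W) (hu : u - c ∈ Wᗮ) (hv : v - c ∈ Wᗮ) :
    ⟪a, u⟫ + ⟪b, v⟫ = ⟪a, v⟫ + ⟪b, u⟫ := by
  have hab : a - b ∈ W := by
    have := W.sub_mem ha hb; simpa [sub_sub_sub_cancel_right] using this
  have huv : u - v ∈ Wᗮ := by
    have := Wᗮ.sub_mem hu hv; simpa [sub_sub_sub_cancel_right] using this
  have h0 : ⟪a - b, u - v⟫ = 0 := huv _ hab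
  rw [inner_sub_left, inner_sub_right, inner_sub_right] at h0
  linarith

theorem statement11 (n : ℕ) (hn : 1 ≤ n)
    (W : Submodule ℝ (EuclideanSpace ℝ (Fin n)))
    (d c xstar sstar : EuclideanSpace ℝ (Fin n))
    (hxstarW : xstar - d ∈ W) (hxstarpos : ∀ i, 0 ≤ xstar i)
    (hsstarW : sstar - c ∈ Wᗮ) (hsstarpos : ∀ i, 0 ≤ sstar i)
    (hopt : ⟪xstar, sstar⟫ = 0)
    (μ : ℝ) (hμ : 0 < μ)
    (x s : EuclideanSpace ℝ (Fin n))
    (hxW : x - d ∈ W) (hsW : s - c ∈ Wᗮ)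
    (hxpos : ∀ i, 0 < x i) (hspos : ∀ i, 0 < s i)
    (hxs : ∀ i, x i * s i = μ) :
    ⟪x, sstar⟫ ≤ n * μ ∧ ⟪xstar, s⟫ ≤ n * μ ∧
    (∀ i, x i ≤ primalMCP n W d sstar (n * μ) i) ∧
    (∀ i, s i ≤ dualMCP n W c xstar (n * μ) i) ∧
    (∀ y : EuclideanSpace ℝ (Fin n), y - d ∈ W → (∀ j, 0 ≤ y j) → ⟪y, sstar⟫ ≤ n * μ →
      ∀ i, y i ≤ 2 * n * x i) ∧
    (∀ t : EuclideanSpace ℝ (Fin n), t - c ∈ Wᗮ → (∀ j, 0 ≤ t j) → ⟪xstar, t⟫ ≤ n * μ →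
      ∀ i, t i ≤ 2 * n * s i) ∧
    (∀ i, primalMCP n W d sstar (n * μ) i / (2 * n) ≤ x i) ∧
    (∀ i, dualMCP n W c xstar (n * μ) i / (2 * n) ≤ s i) := by
  have hxsinner : ⟪x, s⟫ = (n : ℝ) * μ := by
    rw [PiLp.inner_apply]
    simp [hxs, Finset.sum_const, mul_comm]
  have hsplit : ⟪x, sstar⟫ + ⟪xstar, s⟫ = n * μ := by
    have := inner_cross hxW hxstarW hsW hsstarW
    linarith [hxsinner, hopt]
  have h1nn : (0:ℝ) ≤ ⟪x, sstar⟫ :=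
    inner_nonneg_of_nonneg _ _ (fun i => (hxpos i).le) hsstarpos
  have h2nn : (0:ℝ) ≤ ⟪xstar, s⟫ :=
    inner_nonneg_of_nonneg _ _ hxstarpos (fun i => (hspos i).le)
  have h1 : ⟪x, sstar⟫ ≤ n * μ := by linarith
  have h2 : ⟪xstar, s⟫ ≤ n * μ := by linarith
  -- key bounds
  have hybound : ∀ y : EuclideanSpace ℝ (Fin n), y - d ∈ W → (∀ j, 0 ≤ y j) →
      ⟪y, sstar⟫ ≤ n * μ → ∀ i, y i ≤ 2 * n * x i := by
    intro y hyW hynn hyg i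
    have hcross := inner_cross hyW hxW hsW hsstarW
    have hys : ⟪y, s⟫ ≤ 2 * n * μ := by linarith [hxsinner, h1nn]
    have hle : y i * s i ≤ ⟪y, s⟫ := single_le_inner _ _ hynn (fun j => (hspos j).le) i
    have hsip := hspos i
    have hμi := hxs i
    nlinarith [hle.trans hys]
  have htbound : ∀ t : EuclideanSpace ℝ (Fin n), t - c ∈ Wᗮ → (∀ j, 0 ≤ t j) →
      ⟪xstar, t⟫ ≤ n * μ → ∀ i, t i ≤ 2 * n * s i := by
    intro t htW htnn htg i
    have hcross := inner_cross hxW hxstarW htW hsW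
    have hxt : ⟪x, t⟫ ≤ 2 * n * μ := by linarith [hxsinner, h2nn]
    have hle : x i * t i ≤ ⟪x, t⟫ := single_le_inner _ _ (fun j => (hxpos j).le) htnn i
    have hxip := hxpos i
    have hμi := hxs i
    nlinarith [hle.trans hxt]
  -- sSup facts
  have hPbdd : ∀ i, BddAbove {t : ℝ | ∃ y : EuclideanSpace ℝ (Fin n),
      y - d ∈ W ∧ (∀ j, 0 ≤ y j) ∧ ⟪y, sstar⟫ ≤ n * μ ∧ t = y i} := by
    intro i
    refine ⟨2 * n * x i, ?_⟩
    rintro t ⟨y, hyW, hynn, hyg, rfl⟩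
    exact hybound y hyW hynn hyg i
  have hDbdd : ∀ i, BddAbove {r : ℝ | ∃ t : EuclideanSpace ℝ (Fin n),
      t - c ∈ Wᗮ ∧ (∀ j, 0 ≤ t j) ∧ ⟪xstar, t⟫ ≤ n * μ ∧ r = t i} := by
    intro i
    refine ⟨2 * n * s i, ?_⟩
    rintro r ⟨t, htW, htnn, htg, rfl⟩
    exact htbound t htW htnn htg i
  have hxmem : ∀ i, (x i : ℝ) ∈ {t : ℝ | ∃ y : EuclideanSpace ℝ (Fin n),
      y - d ∈ W ∧ (∀ j, 0 ≤ y j) ∧ ⟪y, sstar⟫ ≤ n * μ ∧ t = y i} :=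
    fun i => ⟨x, hxW, fun j => (hxpos j).le, h1, rfl⟩
  have hsmem : ∀ i, (s i : ℝ) ∈ {r : ℝ | ∃ t : EuclideanSpace ℝ (Fin n),
      t - c ∈ Wᗮ ∧ (∀ j, 0 ≤ t j) ∧ ⟪xstar, t⟫ ≤ n * μ ∧ r = t i} :=
    fun i => ⟨s, hsW, fun j => (hspos j).le, h2, rfl⟩
  have hxle : ∀ i, x i ≤ primalMCP n W d sstar (n * μ) i :=
    fun i => le_csSup (hPbdd i) (hxmem i)
  have hsle : ∀ i, s i ≤ dualMCP n W c xstar (n * μ) i :=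
    fun i => le_csSup (hDbdd i) (hsmem i)
  have h2n : (0:ℝ) < 2 * n := by positivity
  refine ⟨h1, h2, hxle, hsle, hybound, htbound, ?_, ?_⟩
  · intro i
    rw [div_le_iff₀ h2n]
    have : primalMCP n W d sstar (n * μ) i ≤ 2 * n * x i := by
      apply csSup_le ⟨x i, hxmem i⟩
      rintro t ⟨y, hyW, hynn, hyg, rfl⟩
      exact hybound y hyW hynn hyg i
    linarith [this]
  · intro i
    rw [div_le_iff₀ h2n]
    have : dualMCP n W c xstar (n * μ) i ≤ 2 * n * s i := by
      apply csSup_le ⟨s i, hsmem i⟩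
      rintro r ⟨t, htW, htnn, htg, rfl⟩
      exact htbound t htW htnn htg i
    linarith [this]
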